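/- Let (A, (‖·‖_i)) be a unital B_0-algebra with orthogonal basis (e_n) and suppose some element x = Σ t_n e_n has unbounded coefficient sequence (t_n). Then there is a subsequence (e_{k_n}) such that the series Σ_{n=1}^∞ e_{k_n} is absolutely convergent (with respect to each seminorm) and moreover Σ_{n=1}^∞ n^{1/2} e_{k_n} converges in A. -/

import Mathlib

open Filter Topology

/-- `x = Σ_{n} a n • e n` as convergence of ordered partial sums. -/
def HasExpansion {A : Type*} [AddCommMonoid A] [Module ℂ A] [TopologicalSpace A]
    (a : ℕ → ℂ) (e : ℕ → A) (x : A) : Prop :=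
  Tendsto (fun N => ∑ n ∈ Finset.range N, a n • e n) atTop (𝓝 x)

lemma seminorm_sum_le' {A : Type*} [Ring A] [Module ℂ A] (q : Seminorm ℂ A)
    (s : Finset ℕ) (f : ℕ → A) : q (∑ n ∈ s, f n) ≤ ∑ n ∈ s, q (f n) := by
  classical
  induction s using Finset.induction_on with
  | empty => simp
  | insert a s h ih =>
    rw [Finset.sum_insert h, Finset.sum_insert h]
    exact (map_add_le_add q _ _).trans (by gcongr)

/-- From an element with unbounded coefficients one extracts a subsequence with
Σ e_{kₙ} absolutely convergent and Σ n^{1/2} e_{kₙ} convergent. -/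
theorem stmt17 {A : Type*} [Ring A] [Algebra ℂ A] [UniformSpace A] [T2Space A]
    [IsUniformAddGroup A] [ContinuousSMul ℂ A] [CompleteSpace A]
    (p : ℕ → Seminorm ℂ A) (hp : WithSeminorms p)
    (hmono : ∀ i x, p i x ≤ p (i + 1) x)
    (hsub : ∀ i x y, p i (x * y) ≤ p (i + 1) x * p (i + 1) y)
    (e : ℕ → A) (coef : A → ℕ → ℂ)
    (horth : ∀ i j, e i * e j = if i = j then e i else 0)
    (hbasis : ∀ x, HasExpansion (coef x) e x)
    (huniq : ∀ x a, HasExpansion a e x → a = coef x)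
    (x : A) (hub : ¬ ∃ M : ℝ, ∀ n, ‖coef x n‖ ≤ M) :
    ∃ k : ℕ → ℕ, StrictMono k ∧ (∀ i, Summable fun n => p i (e (k n))) ∧
      ∃ y : A,
        Tendsto (fun N => ∑ n ∈ Finset.range N,
          ((Real.sqrt (n + 1) : ℝ) : ℂ) • e (k n)) atTop (𝓝 y) := by
  classical
  -- indices with arbitrarily large coefficients exist beyond any point
  have hgood : ∀ N : ℕ, ∀ M : ℝ, ∃ n, N < n ∧ M ≤ ‖coef x n‖ := by
    intro N M
    by_contra h
    push_neg at h
    apply hub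
    refine ⟨max M ((Finset.range (N + 1)).sup' ⟨0, by simp⟩ fun n => ‖coef x n‖), fun n => ?_⟩
    rcases le_or_gt n N with h1 | h1
    · exact le_max_of_le_right
        (Finset.le_sup' (f := fun n => ‖coef x n‖) (Finset.mem_range.2 (by omega)))
    · exact le_max_of_le_left (h n h1).le
  choose f hf1 hf2 using hgood
  -- the subsequence
  set k : ℕ → ℕ := fun n => Nat.rec (f 0 1) (fun m ih => f ih (((m : ℝ) + 2) ^ 3)) n with hk
  have hklt : ∀ n, k n < k (n + 1) := fun n => hf1 _ _
  have hkmono : StrictMono k := strictMono_nat_of_lt_succ hklt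
  have hkbig : ∀ n : ℕ, ((n : ℝ) + 1) ^ 3 ≤ ‖coef x (k n)‖ := by
    intro n
    cases n with
    | zero => rw [show k 0 = f 0 1 from rfl]; simpa using hf2 0 1
    | succ m =>
      have hkk : k (m + 1) = f (k m) (((m : ℝ) + 2) ^ 3) := rfl
      rw [hkk]
      have h2 := hf2 (k m) (((m : ℝ) + 2) ^ 3)
      refine le_trans (le_of_eq ?_) h2
      push_cast; ring
  -- terms of the expansion of x tend to 0
  have hterm : Tendsto (fun n => coef x n • e n) atTop (𝓝 (0 : A)) := by
    have h1 := ((hbasis x).comp (tendsto_add_atTop_nat 1)).sub (hbasis x)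
    rw [sub_self] at h1
    convert h1 using 2 with n
    simp [Function.comp, Finset.sum_range_succ]
  -- boundedness of seminorms of terms
  have hbd : ∀ i, ∃ M : ℝ, 0 ≤ M ∧ ∀ n, p i (coef x n • e n) ≤ M := by
    intro i
    have h2 : Tendsto (fun n => p i (coef x n • e n)) atTop (𝓝 (p i 0)) :=
      ((hp.continuous_seminorm i).tendsto 0).comp hterm
    obtain ⟨M, hM⟩ := h2.bddAbove_range
    refine ⟨M, le_trans (apply_nonneg _ _) (hM ⟨0, rfl⟩), fun n => hM ⟨n, rfl⟩⟩
  choose M hM0 hM using hbd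
  -- key estimate
  have hnz : ∀ n : ℕ, (0 : ℝ) < ‖coef x (k n)‖ := fun n =>
    lt_of_lt_of_le (by positivity) (hkbig n)
  have hkey : ∀ i n, p i (e (k n)) ≤ M i / ((n : ℝ) + 1) ^ 3 := by
    intro i n
    have hc : coef x (k n) ≠ 0 := by
      have h0 := hnz n
      intro h; rw [h] at h0; simpa using h0
    have h1 : e (k n) = (coef x (k n))⁻¹ • (coef x (k n) • e (k n)) := by
      rw [smul_smul, inv_mul_cancel₀ hc, one_smul]
    rw [h1, map_smul_eq_mul, norm_inv, div_eq_inv_mul]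
    exact mul_le_mul (inv_anti₀ (by positivity) (hkbig n)) (hM i (k n))
      (apply_nonneg _ _) (by positivity)
  -- comparison series
  have hsum2 : Summable (fun n : ℕ => 1 / ((n : ℝ) + 1) ^ 2) := by
    have h0 := Real.summable_one_div_nat_pow.mpr (by norm_num : 1 < 2)
    have h1 := (summable_nat_add_iff 1).mpr h0
    exact h1.congr fun n => by push_cast; ring
  -- the sequence whose convergence we must show
  set g : ℕ → A := fun n => ((Real.sqrt (n + 1) : ℝ) : ℂ) • e (k n) with hg
  have hsq : ∀ n : ℕ, Real.sqrt ((n : ℝ) + 1) ≤ (n : ℝ) + 1 := by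
    intro n
    have h1 : Real.sqrt ((n : ℝ) + 1) ≤ Real.sqrt (((n : ℝ) + 1) ^ 2) :=
      Real.sqrt_le_sqrt (by nlinarith [Nat.cast_nonneg (α := ℝ) n])
    rwa [Real.sqrt_sq (by positivity)] at h1
  have hGle : ∀ i n, p i (g n) ≤ M i * (1 / ((n : ℝ) + 1) ^ 2) := by
    intro i n
    rw [hg]
    simp only [map_smul_eq_mul, Complex.norm_real, Real.norm_eq_abs,
      abs_of_nonneg (Real.sqrt_nonneg _)]
    calc Real.sqrt ((n : ℝ) + 1) * p i (e (k n))
        ≤ ((n : ℝ) + 1) * (M i / ((n : ℝ) + 1) ^ 3) := by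
          exact mul_le_mul (hsq n) (hkey i n) (apply_nonneg _ _) (by positivity)
      _ = M i * (1 / ((n : ℝ) + 1) ^ 2) := by field_simp
  have hGsum : ∀ i, Summable fun n => p i (g n) :=
    fun i => Summable.of_nonneg_of_le (fun n => apply_nonneg _ _) (hGle i)
      (hsum2.mul_left (M i))
  refine ⟨k, hkmono, fun i => ?_, ?_⟩
  · -- absolute convergence of Σ e (k n)
    refine Summable.of_nonneg_of_le (fun n => apply_nonneg _ _)
      (fun n => (hkey i n).trans ?_) (hsum2.mul_left (M i))
    rw [mul_one_div]
    have h2 : ((n : ℝ) + 1) ^ 2 ≤ ((n : ℝ) + 1) ^ 3 := by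
      nlinarith [Nat.cast_nonneg (α := ℝ) n]
    exact div_le_div_of_nonneg_left (hM0 i) (by positivity) h2
  · -- convergence of Σ √(n+1) e(k n)
    have hmono' : ∀ j i : ℕ, j ≤ i → ∀ z, p j z ≤ p i z := by
      intro j i hji
      induction i, hji using Nat.le_induction with
      | base => exact fun z => le_rfl
      | succ i hi ih => exact fun z => (ih z).trans (hmono i z)
    have hsumg : Summable g := by
      rw [summable_iff_vanishing]
      intro U hU
      obtain ⟨⟨s, r⟩, hr, hUsub⟩ := hp.hasBasis_zero_ball.mem_iff.mp hU
      simp only at hr hUsub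
      set i₀ : ℕ := s.sup id with hi₀
      have hsupb : ∀ z : A, (s.sup p) z ≤ p i₀ z := fun z =>
        Seminorm.finset_sup_apply_le (apply_nonneg _ _)
          (fun j hj => hmono' j i₀ (Finset.le_sup (f := id) hj) z)
      obtain ⟨s₀, hs₀⟩ := summable_iff_vanishing.mp (hGsum i₀) (Metric.ball 0 r)
        (Metric.ball_mem_nhds 0 hr)
      refine ⟨s₀, fun t ht => hUsub ?_⟩
      rw [Seminorm.mem_ball_zero]
      calc (s.sup p) (∑ n ∈ t, g n) ≤ p i₀ (∑ n ∈ t, g n) := hsupb _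
        _ ≤ ∑ n ∈ t, p i₀ (g n) := seminorm_sum_le' _ _ _
        _ ≤ |∑ n ∈ t, p i₀ (g n)| := le_abs_self _
        _ < r := by simpa [Real.norm_eq_abs] using hs₀ t ht
    exact ⟨∑' n, g n, hsumg.hasSum.tendsto_sum_nat⟩
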